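/- For every real triple (X,Y,Z) with X²+Y²+Z²=1 there exist complex numbers α, β with |α|²+|β|²=1 such that X = Re(α²+β²), Y = Im(α²+β²) and Z = 2·Im(ᾱβ). -/

import Mathlib

open Complex

/-- For every real triple `(X, Y, Z)` with `X² + Y² + Z² = 1` there exist
complex numbers `α, β` with `|α|² + |β|² = 1` such that `X = Re (α² + β²)`,
`Y = Im (α² + β²)` and `Z = 2 Im (ᾱ β)`. -/
theorem stmt_2 (X Y Z : ℝ) (h : X ^ 2 + Y ^ 2 + Z ^ 2 = 1) :
    ∃ α β : ℂ, ‖α‖ ^ 2 + ‖β‖ ^ 2 = 1 ∧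
      X = (α ^ 2 + β ^ 2).re ∧ Y = (α ^ 2 + β ^ 2).im ∧
      Z = 2 * (starRingEnd ℂ α * β).im := by
  set r : ℝ := Real.sqrt (X ^ 2 + Y ^ 2) with hrdef
  have hr0 : 0 ≤ r := Real.sqrt_nonneg _
  have hr2 : r ^ 2 = X ^ 2 + Y ^ 2 := Real.sq_sqrt (by positivity)
  have hZ2 : Z ^ 2 = 1 - r ^ 2 := by linarith
  have hc2 : (0:ℝ) < (1 + r) / 2 := by linarith
  set c : ℝ := Real.sqrt ((1 + r) / 2) with hcdef
  have hcpos : 0 < c := Real.sqrt_pos.mpr hc2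
  have hcsq : c ^ 2 = (1 + r) / 2 := Real.sq_sqrt hc2.le
  set s : ℝ := Z / (2 * c) with hsdef
  have hssq : s ^ 2 = (1 - r) / 2 := by
    rw [hsdef, div_pow, hZ2]
    field_simp
    nlinarith [hcsq]
  have hcs : 2 * (c * s) = Z := by
    rw [hsdef]; field_simp
  set ζ : ℂ := (X : ℂ) + (Y : ℂ) * I with hζdef
  have habsζ : ‖ζ‖ = r := by
    rw [hζdef, hrdef, Complex.norm_def, Complex.normSq_apply]
    simp [sq]
  set u : ℂ := if r = 0 then 1 else ζ / (r : ℂ) with hudef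
  have habsu : ‖u‖ = 1 := by
    rw [hudef]
    split_ifs with h0
    · simp
    · rw [norm_div, habsζ]
      simp [_root_.abs_of_nonneg hr0, h0]
  have hur : u * (r : ℂ) = ζ := by
    rw [hudef]
    split_ifs with h0
    · have hz : ζ = 0 := by
        have := habsζ; rw [h0] at this
        exact norm_eq_zero.mp this
      simp [hz, h0]
    · have : (r : ℂ) ≠ 0 := by exact_mod_cast h0
      field_simp
  obtain ⟨w, hw⟩ : ∃ w : ℂ, w ^ 2 = u :=
    IsAlgClosed.exists_pow_nat_eq u (by norm_num)
  have habsw : ‖w‖ = 1 := by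
    have h2 : ‖w‖ ^ 2 = 1 := by
      rw [← norm_pow, hw, habsu]
    nlinarith [norm_nonneg w]
  refine ⟨w * (c : ℂ), I * w * (s : ℂ), ?_, ?_, ?_, ?_⟩
  · simp [map_mul, habsw, Complex.norm_real, mul_pow]
    rw [hcsq, hssq]; ring
  · have hsum : (w * (c:ℂ)) ^ 2 + (I * w * (s:ℂ)) ^ 2 = ζ := by
      have : (w * (c:ℂ)) ^ 2 + (I * w * (s:ℂ)) ^ 2 = w ^ 2 * ((c:ℂ)^2 - (s:ℂ)^2) := by
        ring_nf
        rw [Complex.I_sq]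
        ring
      rw [this, hw]
      have hcs2 : ((c:ℂ)^2 - (s:ℂ)^2) = (r : ℂ) := by
        push_cast [← Complex.ofReal_pow]
        rw [hcsq, hssq]  -- c^2 - s^2 = r over ℝ, coerce
        push_cast
        ring
      rw [hcs2, hur]
    rw [hsum, hζdef]
    simp
  · have hsum : (w * (c:ℂ)) ^ 2 + (I * w * (s:ℂ)) ^ 2 = ζ := by
      have : (w * (c:ℂ)) ^ 2 + (I * w * (s:ℂ)) ^ 2 = w ^ 2 * ((c:ℂ)^2 - (s:ℂ)^2) := by
        ring_nf
        rw [Complex.I_sq]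
        ring
      rw [this, hw]
      have hcs2 : ((c:ℂ)^2 - (s:ℂ)^2) = (r : ℂ) := by
        push_cast [← Complex.ofReal_pow]
        rw [hcsq, hssq]
        push_cast
        ring
      rw [hcs2, hur]
    rw [hsum, hζdef]
    simp
  · have hww : starRingEnd ℂ w * w = 1 := by
      rw [mul_comm, Complex.mul_conj]
      norm_cast
      rw [Complex.normSq_eq_norm_sq, habsw]; norm_num
    have : starRingEnd ℂ (w * (c:ℂ)) * (I * w * (s:ℂ))
        = ((c * s : ℝ) : ℂ) * I * (starRingEnd ℂ w * w) := by
      simp [map_mul, Complex.conj_ofReal]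
      ring
    rw [this, hww, mul_one]
    have : (((c * s : ℝ) : ℂ) * I).im = c * s := by simp
    rw [this]
    linarith [hcs]
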